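/- Let k ≥ 0 be an index with s_k ≡ 3 (mod 4) and t_k = 2^{m+e−1} t' where t' is odd (and m+e−1 ≥ 1). Then t_{k+L} = 2^{m+e−1} t'' for an odd integer t'' with t'' ≡ t' + 2 (mod 4), and the Kronecker symbols satisfy (s_{k+L}/t_{k+L}) = −(s_k/t_k). -/

import Mathlib

/-- The Kronecker symbol `(s/t)` for a natural denominator `t`: writing `t = 2^j * t'`
with `t'` odd, `(s/t) = (s/2)^j * (s/t')`, where `(s/t')` is the Jacobi symbol and
`(s/2) = 1` if `s ≡ ±1 (mod 8)`, `(s/2) = -1` if `s ≡ ±3 (mod 8)` (and `0` for even `s`). -/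
def kron (s : ℤ) (t : ℕ) : ℤ :=
  (if s % 8 = 1 ∨ s % 8 = 7 then 1
   else if s % 8 = 3 ∨ s % 8 = 5 then -1 else 0) ^ padicValNat 2 t
    * jacobiSym s (t / 2 ^ padicValNat 2 t)


private def c8 (z : ℤ) : ℤ := if z % 8 = 1 ∨ z % 8 = 7 then 1 else -1

private lemma c8_pm (z : ℤ) : c8 z = 1 ∨ c8 z = -1 := by
  unfold c8; split <;> simp

private lemma c8_sq (z : ℤ) : c8 z * c8 z = 1 := by
  rcases c8_pm z with h | h <;> rw [h] <;> norm_num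

private lemma kron_if_eq (z : ℤ) (hz : z % 2 = 1) :
    (if z % 8 = 1 ∨ z % 8 = 7 then (1:ℤ) else if z % 8 = 3 ∨ z % 8 = 5 then -1 else 0)
      = c8 z := by
  unfold c8
  have h8 : z % 8 = 1 ∨ z % 8 = 3 ∨ z % 8 = 5 ∨ z % 8 = 7 := by omega
  rcases h8 with h | h | h | h <;> simp [h]

private lemma negpow_congr {a b : ℕ} (h : a % 2 = b % 2) : ((-1:ℤ))^a = (-1)^b := by
  rcases Nat.even_or_odd a with ha | ha
  · have hb : Even b := by rw [Nat.even_iff] at *; omega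
    rw [ha.neg_one_pow, hb.neg_one_pow]
  · have hb : Odd b := by rw [Nat.odd_iff] at *; omega
    rw [ha.neg_one_pow, hb.neg_one_pow]

private lemma jacobiSym_two (Q : ℕ) (h : Q % 2 = 1) : jacobiSym 2 Q = c8 (Q : ℤ) := by
  rw [jacobiSym.at_two (Nat.odd_iff.mpr h), ZMod.χ₈_nat_eq_if_mod_eight]
  unfold c8
  have h1 : ((Q : ℤ)) % 8 = ((Q % 8 : ℕ) : ℤ) := by push_cast; omega
  have h8 : Q % 8 = 1 ∨ Q % 8 = 3 ∨ Q % 8 = 5 ∨ Q % 8 = 7 := by omega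
  rcases h8 with h' | h' | h' | h' <;> simp [h', h1, h] <;> omega

private lemma jacobiSym_neg_one (Q : ℕ) (h : Q % 2 = 1) :
    jacobiSym (-1) Q = (if Q % 4 = 1 then (1:ℤ) else -1) := by
  rw [jacobiSym.at_neg_one (Nat.odd_iff.mpr h), ZMod.χ₄_nat_eq_if_mod_four]
  have h4 : Q % 4 = 1 ∨ Q % 4 = 3 := by omega
  rcases h4 with h' | h' <;> simp [h', h]

private lemma c8_add_even (z w : ℤ) (hz : z % 2 = 1) (hw : w % 2 = 0) :
    c8 (z + 4*w) = c8 z := by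
  unfold c8
  have h8 : (z + 4*w) % 8 = z % 8 := by omega
  rw [h8]

private lemma c8_add_odd (z w : ℤ) (hz : z % 2 = 1) (hw : w % 2 = 1) :
    c8 (z + 4*w) = -c8 z := by
  unfold c8
  have h8 : z % 8 = 1 ∨ z % 8 = 3 ∨ z % 8 = 5 ∨ z % 8 = 7 := by omega
  have h8' : (z + 4*w) % 8 = (z % 8 + 4) % 8 := by omega
  rcases h8 with h | h | h | h <;> rw [h8', h] <;> norm_num
private lemma solveit (C1 C2 G1 G2 D E S χ ε J1 J2 : ℤ)
    (hD : D*D = 1) (hE : E*E = 1) (hS : S*S = 1) (hχ : χ*χ = 1)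
    (hC1 : C1*C1 = 1) (hC2 : C2*C2 = 1) (hG1 : G1*G1 = 1)
    (hEq : D * (ε*E) * C2 * (χ*S) * J2 = D * E * C1 * S * J1)
    (hkey : C2*C1*G2*G1*χ = -ε) :
    G2 * J2 = -(G1 * J1) := by
  have h2 : (D*D)*(E*E)*(S*S)*C1 * (ε * C2 * χ * J2) = (D*D)*(E*E)*(S*S)*(C1*C1)*J1 := by
    linear_combination (D*E*S*C1) * hEq
  rw [hD, hE, hS, hC1] at h2
  have hJ1 : J1 = ε * C2 * C1 * χ * J2 := by linear_combination -h2
  have h3 : (χ*χ)*(G1*G1)*(C2*C2)*(C1*C1)*G2 = -(χ*G1*C2*C1*ε) := by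
    linear_combination (χ*G1*C2*C1) * hkey
  rw [hχ, hG1, hC2, hC1] at h3
  have hG2' : G2 = -(χ*G1*C2*C1*ε) := by linear_combination h3
  linear_combination J2 * hG2' + G1 * hJ1
private lemma star (p P ε : ℤ) (q' Q : ℕ) (j : ℕ)
    (hq' : q' % 2 = 1) (hQ : Q % 2 = 1) (hq'0 : 0 < q') (hQ0 : 0 < Q)
    (hε : ε = 1 ∨ ε = -1)
    (hdet : p * Q - P * (2^j * q') = ε) :
    jacobiSym P Q = jacobiSym (-ε) Q * jacobiSym ε q' * (jacobiSym 2 Q)^j *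
      (-1)^(q'/2 * (Q/2)) * jacobiSym p q' := by
  have hε2 : ε * ε = 1 := by rcases hε with rfl | rfl <;> norm_num
  -- coprimality facts
  have coppq : IsCoprime p ((q':ℕ):ℤ) :=
    ⟨ε * Q, -(ε * P * 2^j), by push_cast; linear_combination ε * hdet + hε2⟩
  have copq'Q : IsCoprime ((q':ℕ):ℤ) ((Q:ℕ):ℤ) :=
    ⟨-(ε * P * 2^j), ε * p, by push_cast; linear_combination ε * hdet + hε2⟩
  have cop2Q : IsCoprime (2:ℤ) ((Q:ℕ):ℤ) := by
    obtain ⟨r, hr⟩ : ∃ r : ℤ, (Q:ℤ) = 2*r + 1 := ⟨(Q:ℤ)/2, by omega⟩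
    exact ⟨-r, 1, by rw [hr]; ring⟩
  -- h1 : J(P*(2^j*q')) Q = J(-ε) Q
  have h1 : jacobiSym (P * (2^j * q')) Q = jacobiSym (-ε) Q := by
    apply jacobiSym.mod_left'
    have hme : P * (2^j * q') ≡ -ε [ZMOD ((Q:ℕ):ℤ)] :=
      Int.ModEq.symm (Int.modEq_iff_dvd.mpr ⟨p, by push_cast; linear_combination -hdet⟩)
    exact hme
  rw [jacobiSym.mul_left, jacobiSym.mul_left, jacobiSym.pow_left] at h1
  -- h3 : J(p*Q) q' = J(ε) q'
  have h3 : jacobiSym (p * Q) q' = jacobiSym ε q' := by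
    apply jacobiSym.mod_left'
    have hme : p * Q ≡ ε [ZMOD ((q':ℕ):ℤ)] :=
      Int.ModEq.symm (Int.modEq_iff_dvd.mpr ⟨P * 2^j, by push_cast; linear_combination hdet⟩)
    exact hme
  rw [jacobiSym.mul_left] at h3
  -- reciprocity
  have h2 := jacobiSym.quadratic_reciprocity (Nat.odd_iff.mpr hq') (Nat.odd_iff.mpr hQ)
  -- square facts
  have sq' : ∀ (a : ℤ) (b : ℕ), IsCoprime a ((b:ℕ):ℤ) →
      jacobiSym a b * jacobiSym a b = 1 := by
    intro a b h
    have h2 := jacobiSym.sq_one (Int.isCoprime_iff_gcd_eq_one.mp h)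
    rw [pow_two] at h2; exact h2
  have sqp := sq' p q' coppq
  have sqB' := sq' (Q:ℤ) q' (by exact_mod_cast copq'Q.symm)
  have sq2 := sq' 2 Q cop2Q
  have sqs : ((-1:ℤ))^(q'/2 * (Q/2)) * ((-1:ℤ))^(q'/2 * (Q/2)) = 1 := by
    rw [← pow_add]
    exact Even.neg_one_pow ⟨_, rfl⟩
  have sq2j : (jacobiSym 2 Q)^j * (jacobiSym 2 Q)^j = 1 := by
    rw [← mul_pow, sq2, one_pow]
  rw [h2] at h1
  rw [← h1, ← h3]
  linear_combination (-(jacobiSym P Q * (-1:ℤ)^(q'/2 * (Q/2)) * (-1:ℤ)^(q'/2 * (Q/2)) *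
      jacobiSym (↑Q) q' * jacobiSym (↑Q) q' * jacobiSym p q' * jacobiSym p q')) * sq2j +
    (-(jacobiSym P Q * jacobiSym (↑Q) q' * jacobiSym (↑Q) q' * jacobiSym p q' *
      jacobiSym p q')) * sqs +
    (-(jacobiSym P Q * jacobiSym p q' * jacobiSym p q')) * sqB' +
    (-(jacobiSym P Q)) * sqp

set_option maxHeartbeats 2000000 in
private lemma core (j M e : ℕ) (hjme : j = M + e + 1)
    (x y u v u' : ℤ) (hu : u = 2^e * u') (hu'odd : u' % 2 = 1)
    (hdetM : (1 + 2^(M+2)*x) * (1 + 2^(M+2)*v) - 2^(M+2)*y * (2^(M+2)*u) = 1)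
    (p t' P Q : ℤ) (ht'1 : 1 ≤ t') (hP0 : 0 ≤ P) (hQ1 : 1 ≤ Q)
    (hp4 : p % 4 = 3) (ht'odd : t' % 2 = 1)
    (ε : ℤ) (hεpm : ε = 1 ∨ ε = -1)
    (hdet : p * Q - P * (2^j * t') = ε)
    (p₂ P₂ Q₂ t'' : ℤ)
    (ht'' : t'' = t' + 2*u'*p + 2^(M+2)*v*t')
    (ht''1 : 1 ≤ t'')
    (hp₂ : p₂ = (1 + 2^(M+2)*x) * p + 2^(M+2)*y * (2^j * t'))
    (hP₂ : P₂ = (1 + 2^(M+2)*x) * P + 2^(M+2)*y * Q)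
    (hQ₂ : Q₂ = 2^(M+2)*u * P + (1 + 2^(M+2)*v) * Q)
    (hQ₂1 : 1 ≤ Q₂)
    (hJ : jacobiSym P₂ Q₂.toNat = jacobiSym P Q.toNat) :
    kron p₂ (2^j * t'').toNat = - kron p (2^j * t').toNat := by
  have hpodd : p % 2 = 1 := by omega
  -- Q odd
  have hQodd : Q % 2 = 1 := by
    have h1 := Int.mul_emod p Q 2
    rw [hpodd, one_mul] at h1
    have h2 : P * (2^j * t') = 2 * (P * (2^(M+e) * t')) := by rw [hjme]; ring
    rcases hεpm with rfl | rfl <;> omega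
  -- congruences for the shifted values
  have hQ₂' : Q₂ = Q + 4*(2^M*(u*P + v*Q)) := by rw [hQ₂]; ring
  have hQ₂4 : Q₂ % 4 = Q % 4 ∧ Q₂ % 2 = 1 := by omega
  have hp₂' : p₂ = p + 4*(2^M*(x*p + y*(2^j*t'))) := by rw [hp₂]; ring
  have hp₂4 : p₂ % 4 = 3 ∧ p₂ % 2 = 1 := by omega
  have hup : (u'*p) % 2 = 1 := by
    have h1 := Int.mul_emod u' p 2
    rw [hpodd, hu'odd, one_mul] at h1
    omega
  have ht''a : t'' = t' + 2*(u'*p) + 4*(2^M*(v*t')) := by rw [ht'']; ring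
  have ht''4 : t'' % 4 = (t' + 2) % 4 ∧ t'' % 2 = 1 := by omega
  -- determinant at the shifted level
  have h2me : (2:ℤ)^(M+2) * 2^e = 2^j * 2 := by
    rw [← pow_add, hjme, ← pow_succ]
    congr 1
    omega
  have hq₂eq : 2^(M+2)*u * p + (1 + 2^(M+2)*v) * (2^j*t') = 2^j * t'' := by
    rw [ht'', hu]
    linear_combination (u' * p) * h2me
  have hdet2 : p₂ * Q₂ - P₂ * (2^j * t'') = ε := by
    rw [hp₂, hP₂, hQ₂, ← hq₂eq]
    linear_combination (p*Q - P*(2^j*t')) * hdetM + hdet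
  -- x + v is even
  have hxv : (x + v) % 2 = 0 := by
    have h0 : (2:ℤ)^(M+2) * (x + v + 2^(M+2)*(x*v) - 2^(M+2)*(y*u)) = 0 := by
      linear_combination hdetM
    have h1 : x + v + 2^(M+2)*(x*v) - 2^(M+2)*(y*u) = 0 :=
      (mul_eq_zero.mp h0).resolve_left (pow_ne_zero (M+2) two_ne_zero)
    have h2 : (2:ℤ)^(M+2)*(x*v) = 2*(2^(M+1)*(x*v)) := by ring
    have h3 : (2:ℤ)^(M+2)*(y*u) = 2*(2^(M+1)*(y*u)) := by ring
    omega
  -- natural number versions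
  have hQN : ((Q.toNat : ℕ) : ℤ) = Q := Int.toNat_of_nonneg (by omega)
  have hQ2N : ((Q₂.toNat : ℕ) : ℤ) = Q₂ := Int.toNat_of_nonneg (by omega)
  have hT' : ((t'.toNat : ℕ) : ℤ) = t' := Int.toNat_of_nonneg (by omega)
  have hT'' : ((t''.toNat : ℕ) : ℤ) = t'' := Int.toNat_of_nonneg (by omega)
  have hQNodd : Q.toNat % 2 = 1 := by omega
  have hQ2Nodd : Q₂.toNat % 2 = 1 := by omega
  have hT'odd : t'.toNat % 2 = 1 := by omega
  have hT''odd : t''.toNat % 2 = 1 := by omega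
  have hQNpos : 0 < Q.toNat := by omega
  have hQ2Npos : 0 < Q₂.toNat := by omega
  have hT'pos : 0 < t'.toNat := by omega
  have hT''pos : 0 < t''.toNat := by omega
  -- kron unfolding
  have hval : ∀ z : ℤ, 1 ≤ z → z % 2 = 1 →
      (2^j * z).toNat = 2^j * z.toNat ∧ padicValNat 2 (2^j * z.toNat) = j ∧
      (2^j * z.toNat) / 2^j = z.toNat := by
    intro z hz1 hzodd
    have hzN : ((z.toNat : ℕ) : ℤ) = z := Int.toNat_of_nonneg (by omega)
    have h1 : (((2^j * z.toNat : ℕ)) : ℤ) = 2^j * z := by push_cast [hzN]; ring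
    refine ⟨by omega, ?_, ?_⟩
    · rw [padicValNat.mul (by positivity) (by omega), padicValNat.prime_pow,
        padicValNat.eq_zero_of_not_dvd (by omega), add_zero]
    · exact Nat.mul_div_cancel_left _ (by positivity)
  have hkron1 : kron p (2^j * t').toNat = c8 p ^ j * jacobiSym p t'.toNat := by
    obtain ⟨e1, e2, e3⟩ := hval t' ht'1 ht'odd
    rw [kron, e1, e2, e3, kron_if_eq p hpodd]
  have hkron2 : kron p₂ (2^j * t'').toNat = c8 p₂ ^ j * jacobiSym p₂ t''.toNat := by
    obtain ⟨e1, e2, e3⟩ := hval t'' ht''1 ht''4.2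
    rw [kron, e1, e2, e3, kron_if_eq p₂ hp₂4.2]
  -- star at both levels
  have hstar1 := star p P ε t'.toNat Q.toNat j hT'odd hQNodd hT'pos hQNpos hεpm
    (by rw [hQN, hT']; exact hdet)
  have hstar2 := star p₂ P₂ ε t''.toNat Q₂.toNat j hT''odd hQ2Nodd hT''pos hQ2Npos hεpm
    (by rw [hQ2N, hT'']; exact hdet2)
  -- comparison facts
  have hDeq : jacobiSym (-ε) Q₂.toNat = jacobiSym (-ε) Q.toNat := by
    rcases hεpm with rfl | rfl
    · rw [jacobiSym_neg_one _ hQ2Nodd, jacobiSym_neg_one _ hQNodd,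
        show Q₂.toNat % 4 = Q.toNat % 4 by omega]
    · norm_num [jacobiSym.one_left]
  have hDpm : jacobiSym (-ε) Q.toNat = 1 ∨ jacobiSym (-ε) Q.toNat = -1 := by
    rcases hεpm with rfl | rfl
    · rw [jacobiSym_neg_one _ hQNodd]; split <;> simp
    · norm_num [jacobiSym.one_left]
  have hEeq : jacobiSym ε t''.toNat = ε * jacobiSym ε t'.toNat := by
    rcases hεpm with rfl | rfl
    · simp [jacobiSym.one_left]
    · rw [jacobiSym_neg_one _ hT''odd, jacobiSym_neg_one _ hT'odd]
      have h4 : (t''.toNat % 4 = 3 ∧ t'.toNat % 4 = 1) ∨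
          (t''.toNat % 4 = 1 ∧ t'.toNat % 4 = 3) := by omega
      rcases h4 with ⟨ha, hb⟩ | ⟨ha, hb⟩ <;> simp [ha, hb]
  have hEpm : jacobiSym ε t'.toNat = 1 ∨ jacobiSym ε t'.toNat = -1 := by
    rcases hεpm with rfl | rfl
    · norm_num [jacobiSym.one_left]
    · rw [jacobiSym_neg_one _ hT'odd]; split <;> simp
  -- the sign χ₄(Q)
  set χ : ℤ := if Q.toNat % 4 = 1 then 1 else -1 with hχdef
  have hχpm : χ = 1 ∨ χ = -1 := by rw [hχdef]; split <;> simp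
  -- sigma comparison
  have hSeq : ((-1:ℤ))^(t''.toNat/2 * (Q₂.toNat/2)) = χ * (-1)^(t'.toNat/2 * (Q.toNat/2)) := by
    rcases Nat.even_or_odd (Q.toNat/2) with hQe | hQe
    · have hQ2e : Even (Q₂.toNat/2) := by rw [Nat.even_iff] at hQe ⊢; omega
      have hχ1 : χ = 1 := by rw [hχdef, if_pos (by rw [Nat.even_iff] at hQe; omega)]
      rw [Even.neg_one_pow (Nat.even_mul.mpr (Or.inr hQ2e)),
        Even.neg_one_pow (Nat.even_mul.mpr (Or.inr hQe)), hχ1, mul_one]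
    · have hQ2e : Odd (Q₂.toNat/2) := by rw [Nat.odd_iff] at hQe ⊢; omega
      have hχ1 : χ = -1 := by
        rw [hχdef, if_neg (by rw [Nat.odd_iff] at hQe; omega)]
      rcases Nat.even_or_odd (t'.toNat/2) with hte | hte
      · have ht2e : Odd (t''.toNat/2) := by rw [Nat.even_iff] at hte; rw [Nat.odd_iff]; omega
        rw [Even.neg_one_pow (Nat.even_mul.mpr (Or.inl hte)),
          Odd.neg_one_pow (Nat.odd_mul.mpr ⟨ht2e, hQ2e⟩), hχ1]
        norm_num
      · have ht2e : Even (t''.toNat/2) := by rw [Nat.odd_iff] at hte; rw [Nat.even_iff]; omega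
        rw [Even.neg_one_pow (Nat.even_mul.mpr (Or.inl ht2e)),
          Odd.neg_one_pow (Nat.odd_mul.mpr ⟨hte, hQe⟩), hχ1]
        norm_num
  -- χ₈ conversions
  have hCQ : jacobiSym 2 Q.toNat = c8 Q := by rw [jacobiSym_two _ hQNodd, hQN]
  have hCQ2 : jacobiSym 2 Q₂.toNat = c8 Q₂ := by rw [jacobiSym_two _ hQ2Nodd, hQ2N]
  -- product-of-c8 helpers
  have hmatch : ∀ wq wp : ℤ, Q₂ = Q + 4*wq → p₂ = p + 4*wp → (wq + wp) % 2 = 0 →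
      c8 Q₂ * c8 Q * c8 p₂ * c8 p = 1 := by
    intro wq wp h1 h2 h3
    rcases (by omega : wq % 2 = 0 ∧ wp % 2 = 0 ∨ wq % 2 = 1 ∧ wp % 2 = 1) with ⟨ha, hb⟩ | ⟨ha, hb⟩
    · rw [h1, h2, c8_add_even Q wq hQodd ha, c8_add_even p wp hpodd hb]
      linear_combination (c8 p * c8 p) * c8_sq Q + c8_sq p
    · rw [h1, h2, c8_add_odd Q wq hQodd ha, c8_add_odd p wp hpodd hb]
      linear_combination (c8 p * c8 p) * c8_sq Q + c8_sq p
  have hmis : ∀ wq wp : ℤ, Q₂ = Q + 4*wq → p₂ = p + 4*wp → (wq + wp) % 2 = 1 →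
      c8 Q₂ * c8 Q * c8 p₂ * c8 p = -1 := by
    intro wq wp h1 h2 h3
    rcases (by omega : wq % 2 = 0 ∧ wp % 2 = 1 ∨ wq % 2 = 1 ∧ wp % 2 = 0) with ⟨ha, hb⟩ | ⟨ha, hb⟩
    · rw [h1, h2, c8_add_even Q wq hQodd ha, c8_add_odd p wp hpodd hb]
      linear_combination (-(c8 p * c8 p)) * c8_sq Q - c8_sq p
    · rw [h1, h2, c8_add_odd Q wq hQodd ha, c8_add_even p wp hpodd hb]
      linear_combination (-(c8 p * c8 p)) * c8_sq Q - c8_sq p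
  -- χ determination
  have hmul4 := Int.mul_emod p Q 4
  rw [hp4] at hmul4
  have hchi : P * (2^j*t') % 4 = 0 → χ = -ε := by
    intro h4
    rcases (by omega : Q % 4 = 1 ∨ Q % 4 = 3) with h | h
    · rw [h] at hmul4
      norm_num at hmul4
      have hεv : ε = -1 := by
        rcases hεpm with rfl | rfl
        · exfalso; omega
        · rfl
      rw [hεv, hχdef, if_pos (by omega)]
      norm_num
    · rw [h] at hmul4
      norm_num at hmul4
      have hεv : ε = 1 := by
        rcases hεpm with rfl | rfl
        · rfl
        · exfalso; omega
      rw [hεv, hχdef, if_neg (by omega)]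
  have hchi2 : P * (2^j*t') % 4 = 2 → χ = ε := by
    intro h4
    rcases (by omega : Q % 4 = 1 ∨ Q % 4 = 3) with h | h
    · rw [h] at hmul4
      norm_num at hmul4
      have hεv : ε = 1 := by
        rcases hεpm with rfl | rfl
        · rfl
        · exfalso; omega
      rw [hεv, hχdef, if_pos (by omega)]
    · rw [h] at hmul4
      norm_num at hmul4
      have hεv : ε = -1 := by
        rcases hεpm with rfl | rfl
        · exfalso; omega
        · rfl
      rw [hεv, hχdef, if_neg (by omega)]
  -- parity inputs
  have hvQ := Int.mul_emod v Q 2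
  rw [hQodd, mul_one] at hvQ
  have hxp := Int.mul_emod x p 2
  rw [hpodd, mul_one] at hxp
  have hyq : y*(2^j*t') = 2*(y*(2^(M+e)*t')) := by rw [hjme]; ring
  -- THE KEY SIGN COMPUTATION
  have hkey : (c8 Q₂ * c8 Q * c8 p₂ * c8 p)^j * χ = -ε := by
    rcases Nat.eq_zero_or_pos M with hM0 | hMpos
    · subst hM0
      have h0q : (2:ℤ)^0*(u*P + v*Q) = u*P + v*Q := by norm_num
      have h0p : (2:ℤ)^0*(x*p + y*(2^j*t')) = x*p + y*(2^j*t') := by norm_num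
      rcases Nat.eq_zero_or_pos e with he0 | hepos
      · subst he0
        have huu' : u = u' := by rw [hu]; norm_num
        rcases Int.even_or_odd P with hPe | hPo
        · -- P even
          obtain ⟨P', rfl⟩ := hPe
          have hupar : u*(P' + P') = 2*(u*P') := by ring
          have hprod := hmatch _ _ hQ₂' hp₂' (by omega)
          rw [hprod, one_pow, one_mul]
          apply hchi
          have hjval : j = 1 := by omega
          have h4 : (P' + P')*(2^j*t') = 4*(P'*t') := by rw [hjval]; ring
          omega
        · -- P odd
          have hPodd : P % 2 = 1 := Int.odd_iff.mp hPo
          have hupar := Int.mul_emod u P 2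
          rw [hPodd, mul_one] at hupar
          have hu2 : u % 2 = 1 := by rw [huu']; exact hu'odd
          have hprod := hmis _ _ hQ₂' hp₂' (by omega)
          rw [hprod]
          have hjval : j = 1 := by omega
          rw [hjval, pow_one]
          have hPt := Int.mul_emod P t' 2
          rw [hPodd, ht'odd, one_mul] at hPt
          have h4 : P*(2^j*t') = 2*(P*t') := by rw [hjval]; ring
          rw [hchi2 (by omega)]
          ring
      · -- e ≥ 1
        obtain ⟨e', rfl⟩ : ∃ e', e = e' + 1 := ⟨e - 1, by omega⟩
        have hupar : u*P = 2*(2^e'*u'*P) := by rw [hu]; ring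
        have hprod := hmatch _ _ hQ₂' hp₂' (by omega)
        rw [hprod, one_pow, one_mul]
        apply hchi
        have h4 : P*(2^j*t') = 4*(P*(2^e'*t')) := by rw [hjme]; ring
        omega
    · -- M ≥ 1
      obtain ⟨M', rfl⟩ : ∃ M', M = M' + 1 := ⟨M - 1, by omega⟩
      have hq1 : (2:ℤ)^(M'+1)*(u*P + v*Q) = 2*(2^M'*(u*P + v*Q)) := by ring
      have hq2 : (2:ℤ)^(M'+1)*(x*p + y*(2^j*t')) = 2*(2^M'*(x*p + y*(2^j*t'))) := by ring
      have hprod := hmatch _ _ hQ₂' hp₂' (by omega)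
      rw [hprod, one_pow, one_mul]
      apply hchi
      have h4 : P*(2^j*t') = 4*(P*(2^(M'+e)*t')) := by rw [hjme]; ring
      omega
  -- final assembly
  rw [hkron1, hkron2]
  have h12 : jacobiSym (-ε) Q₂.toNat * jacobiSym ε t''.toNat * (jacobiSym 2 Q₂.toNat)^j *
      (-1)^(t''.toNat/2 * (Q₂.toNat/2)) * jacobiSym p₂ t''.toNat
      = jacobiSym (-ε) Q.toNat * jacobiSym ε t'.toNat * (jacobiSym 2 Q.toNat)^j *
      (-1)^(t'.toNat/2 * (Q.toNat/2)) * jacobiSym p t'.toNat := by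
    rw [← hstar1, ← hstar2, hJ]
  rw [hDeq, hEeq, hSeq, hCQ, hCQ2] at h12
  have hDsq : jacobiSym (-ε) Q.toNat * jacobiSym (-ε) Q.toNat = 1 := by
    rcases hDpm with h | h <;> rw [h] <;> norm_num
  have hEsq : jacobiSym ε t'.toNat * jacobiSym ε t'.toNat = 1 := by
    rcases hEpm with h | h <;> rw [h] <;> norm_num
  have hSsq : ((-1:ℤ))^(t'.toNat/2 * (Q.toNat/2)) * ((-1:ℤ))^(t'.toNat/2 * (Q.toNat/2)) = 1 := by
    rw [← pow_add]
    exact Even.neg_one_pow ⟨_, rfl⟩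
  have hχsq : χ * χ = 1 := by rcases hχpm with h | h <;> rw [h] <;> norm_num
  have hsqpow : ∀ z : ℤ, c8 z ^ j * c8 z ^ j = 1 := by
    intro z
    rw [← mul_pow, c8_sq, one_pow]
  have hkey' : c8 Q₂ ^ j * c8 Q ^ j * c8 p₂ ^ j * c8 p ^ j * χ = -ε := by
    rw [← mul_pow, ← mul_pow, ← mul_pow]
    exact hkey
  exact solveit (c8 Q ^ j) (c8 Q₂ ^ j) (c8 p ^ j) (c8 p₂ ^ j) _ _ _ χ ε _ _
    hDsq hEsq hSsq hχsq (hsqpow Q) (hsqpow Q₂) (hsqpow p) h12 hkey'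
set_option maxHeartbeats 2000000 in
/-- Lemma 1, second case: if `s k ≡ 3 (mod 4)` and `t k = 2^(m+e-1) t'` with `t'` odd,
then `t (k+L) = 2^(m+e-1) t''` with `t''` odd, `t'' ≡ t' + 2 (mod 4)`, and the Kronecker
symbol changes sign from `k` to `k + L`. -/
theorem kronecker_step_f_eq_e_sub_one
    (a s t : ℤ → ℤ) (l : ℕ) (hl : 1 ≤ l)
    (ha_pos : ∀ k : ℤ, 0 ≤ k → 0 < a k)
    (ha_per : ∀ k : ℤ, 0 ≤ k → a (k + l) = a k)
    (hs_neg : s (-1) = 1) (ht_neg : t (-1) = 0)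
    (hs_zero : s 0 = a 0) (ht_zero : t 0 = 1)
    (hs_rec : ∀ k : ℤ, 1 ≤ k → s k = a k * s (k - 1) + s (k - 2))
    (ht_rec : ∀ k : ℤ, 1 ≤ k → t k = a k * t (k - 1) + t (k - 2))
    (L : ℕ) (hL_pos : 0 < L) (hL_even : Even L) (hL_mul : l ∣ L)
    (hD : s ((L : ℤ) - 1) ≡ 1 [ZMOD 4] ∧ s ((L : ℤ) - 2) ≡ 0 [ZMOD 4] ∧
          t ((L : ℤ) - 1) ≡ 0 [ZMOD 4] ∧ t ((L : ℤ) - 2) ≡ 1 [ZMOD 4])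
    (hJpar : ∀ k : ℤ, 0 ≤ k → t (k + L) ≡ t k [ZMOD 2])
    (hJper : ∀ k : ℤ, 0 ≤ k → Odd (t k) →
      jacobiSym (s (k + L)) (t (k + L)).toNat = jacobiSym (s k) (t k).toNat)
    (m : ℕ) (hm : 2 ≤ m) (x y u v : ℤ)
    (hDU : s ((L : ℤ) - 1) = 1 + 2 ^ m * x ∧ s ((L : ℤ) - 2) = 2 ^ m * y ∧
           t ((L : ℤ) - 1) = 2 ^ m * u ∧ t ((L : ℤ) - 2) = 1 + 2 ^ m * v)
    (hUodd : Odd x ∨ Odd y ∨ Odd u ∨ Odd v)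
    (e : ℕ) (u' : ℤ) (hu_ne : u ≠ 0) (hu : u = 2 ^ e * u') (hu'_odd : Odd u')
    (k : ℤ) (hk : 0 ≤ k) (hsk : s k ≡ 3 [ZMOD 4])
    (t' : ℤ) (ht'_odd : Odd t') (htk : t k = 2 ^ (m + e - 1) * t') :
    ∃ t'' : ℤ, Odd t'' ∧ t'' ≡ t' + 2 [ZMOD 4] ∧ t (k + L) = 2 ^ (m + e - 1) * t'' ∧
      kron (s (k + L)) (t (k + L)).toNat = -kron (s k) (t k).toNat := by
  have hL2 : 2 ≤ L := by rcases hL_even with ⟨c, hc⟩; omega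
  -- positivity
  have Hpos : ∀ n : ℕ, (1 ≤ s n ∧ 1 ≤ t n) ∧ (0 ≤ s ((n:ℤ) - 1) ∧ 0 ≤ t ((n:ℤ) - 1)) := by
    intro n
    induction n with
    | zero =>
      simp only [Nat.cast_zero]
      norm_num [hs_zero, ht_zero, hs_neg, ht_neg]
      exact ha_pos 0 le_rfl
    | succ n ih =>
      obtain ⟨⟨h1, h2⟩, h3, h4⟩ := ih
      have ha := ha_pos ((n:ℤ) + 1) (by positivity)
      have hs := hs_rec ((n:ℤ) + 1) (by omega)
      have ht := ht_rec ((n:ℤ) + 1) (by omega)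
      have e1 : (n:ℤ) + 1 - 1 = (n:ℤ) := by ring
      have e2 : (n:ℤ) + 1 - 2 = (n:ℤ) - 1 := by ring
      rw [e1, e2] at hs ht
      have hcast : ((n+1 : ℕ) : ℤ) = (n:ℤ) + 1 := by push_cast; ring
      rw [hcast]
      refine ⟨⟨?_, ?_⟩, ?_, ?_⟩
      · rw [hs]; nlinarith
      · rw [ht]; nlinarith
      · rw [e1]; omega
      · rw [e1]; omega
  -- determinant
  have Hdet : ∀ n : ℕ, s n * t ((n:ℤ)-1) - s ((n:ℤ)-1) * t n = (-1:ℤ)^(n+1) := by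
    intro n
    induction n with
    | zero =>
      simp only [Nat.cast_zero]
      norm_num [hs_zero, ht_zero, hs_neg, ht_neg]
    | succ n ih =>
      have hs := hs_rec ((n:ℤ) + 1) (by omega)
      have ht := ht_rec ((n:ℤ) + 1) (by omega)
      have e1 : (n:ℤ) + 1 - 1 = (n:ℤ) := by ring
      have e2 : (n:ℤ) + 1 - 2 = (n:ℤ) - 1 := by ring
      rw [e1, e2] at hs ht
      have hcast : ((n+1 : ℕ) : ℤ) = (n:ℤ) + 1 := by push_cast; ring
      rw [hcast, e1, pow_succ]
      linear_combination t (↑n) * hs - s (↑n) * ht - ih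
  -- periodicity with period L
  have haL : ∀ i : ℤ, 0 ≤ i → a (i + L) = a i := by
    obtain ⟨c, rfl⟩ := hL_mul
    have key : ∀ c' : ℕ, ∀ i : ℤ, 0 ≤ i → a (i + (l * c' : ℕ)) = a i := by
      intro c'
      induction c' with
      | zero => intro i hi; simp
      | succ c' ih =>
        intro i hi
        have h2 := ha_per (i + (l*c' : ℕ)) (by positivity)
        have h3 : (i + ↑(l * c') + ↑l : ℤ) = i + ↑(l * (c'+1)) := by push_cast; ring
        rw [h3] at h2
        rw [h2]
        exact ih i hi
    exact key c
  -- composition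
  have Hcomp : ∀ N : ℕ, s ((N:ℤ) + L) = s ((L:ℤ)-1) * s N + s ((L:ℤ)-2) * t N ∧
      t ((N:ℤ) + L) = t ((L:ℤ)-1) * s N + t ((L:ℤ)-2) * t N := by
    intro N
    induction N using Nat.strong_induction_on with
    | _ N ih =>
      have hL1 : (1:ℤ) ≤ (L:ℤ) := by exact_mod_cast hL_pos
      rcases N with _ | N
      · simp only [Nat.cast_zero, zero_add]
        have hs := hs_rec (L:ℤ) (by omega)
        have ht := ht_rec (L:ℤ) (by omega)
        have ha0 := haL 0 le_rfl
        rw [zero_add] at ha0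
        rw [hs, ht, ha0, hs_zero, ht_zero]
        constructor <;> ring
      rcases N with _ | N
      · have hcast : ((0+1 : ℕ) : ℤ) = 1 := by norm_num
        rw [hcast]
        have hs := hs_rec (1 + (L:ℤ)) (by omega)
        have ht := ht_rec (1 + (L:ℤ)) (by omega)
        have e1 : (1:ℤ) + ↑L - 1 = (L:ℤ) := by ring
        have e2 : (1:ℤ) + ↑L - 2 = (L:ℤ) - 1 := by ring
        rw [e1, e2] at hs ht
        have ha1 := haL 1 (by norm_num)
        obtain ⟨ih0s, ih0t⟩ := ih 0 (by omega)
        simp only [Nat.cast_zero, zero_add] at ih0s ih0t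
        have hs1 := hs_rec 1 le_rfl
        have ht1 := ht_rec 1 le_rfl
        norm_num at hs1 ht1
        rw [hs_zero, hs_neg] at hs1
        rw [ht_zero, ht_neg] at ht1
        rw [hs, ht, ha1, ih0s, ih0t, hs1, ht1, hs_zero, ht_zero]
        constructor <;> ring
      · have hcast : ((N+1+1 : ℕ) : ℤ) = (N:ℤ) + 1 + 1 := by push_cast; ring
        rw [hcast]
        have hs := hs_rec ((N:ℤ) + 1 + 1 + L) (by omega)
        have ht := ht_rec ((N:ℤ) + 1 + 1 + L) (by omega)
        have e1 : (N:ℤ) + 1 + 1 + ↑L - 1 = (N:ℤ) + 1 + ↑L := by ring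
        have e2 : (N:ℤ) + 1 + 1 + ↑L - 2 = (N:ℤ) + ↑L := by ring
        rw [e1, e2] at hs ht
        have haN := haL ((N:ℤ) + 1 + 1) (by positivity)
        obtain ⟨ih1s, ih1t⟩ := ih (N+1) (by omega)
        obtain ⟨ih0s, ih0t⟩ := ih N (by omega)
        have hcast1 : ((N+1 : ℕ) : ℤ) = (N:ℤ) + 1 := by push_cast; ring
        rw [hcast1] at ih1s ih1t
        have hsr := hs_rec ((N:ℤ) + 1 + 1) (by omega)
        have htr := ht_rec ((N:ℤ) + 1 + 1) (by omega)
        have e3 : (N:ℤ) + 1 + 1 - 1 = (N:ℤ) + 1 := by ring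
        have e4 : (N:ℤ) + 1 + 1 - 2 = (N:ℤ) := by ring
        rw [e3, e4] at hsr htr
        rw [hs, ht, haN, ih1s, ih1t, ih0s, ih0t, hsr, htr]
        constructor <;> ring
  -- set up indices
  obtain ⟨n, rfl⟩ : ∃ n : ℕ, k = (n:ℤ) := ⟨k.toNat, (Int.toNat_of_nonneg hk).symm⟩
  obtain ⟨M, rfl⟩ : ∃ M : ℕ, m = M + 2 := ⟨m - 2, by omega⟩
  obtain ⟨hα, hβ, hγ, hδ⟩ := hDU
  have hexp : M + 2 + e - 1 = M + e + 1 := by omega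
  rw [hexp] at htk ⊢
  have ht'odd : t' % 2 = 1 := Int.odd_iff.mp ht'_odd
  have hu'odd : u' % 2 = 1 := Int.odd_iff.mp hu'_odd
  have hp4 : s (n:ℤ) % 4 = 3 % 4 := hsk
  have hpodd : s (n:ℤ) % 2 = 1 := by omega
  -- determinant at L
  have hdetM : (1 + 2^(M+2)*x) * (1 + 2^(M+2)*v) - 2^(M+2)*y * (2^(M+2)*u) = 1 := by
    have hdL := Hdet (L-1)
    have hc : ((L-1:ℕ):ℤ) = (L:ℤ) - 1 := by omega
    rw [hc, show (L:ℤ)-1-1 = (L:ℤ)-2 by ring, show L-1+1 = L by omega,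
      hL_even.neg_one_pow, hα, hβ, hγ, hδ] at hdL
    exact hdL
  -- determinant at n+1 and the constant ε
  have hdetn := Hdet (n+1)
  rw [show ((n+1:ℕ):ℤ) = (n:ℤ)+1 by push_cast; ring,
    show ((n:ℤ)+1)-1 = (n:ℤ) by ring] at hdetn
  have hPq : s ((n:ℤ)+1) * (2^(M+e+1) * t') - s (n:ℤ) * t ((n:ℤ)+1) = (-1:ℤ)^(n+1+1) := by
    rw [← htk]; exact hdetn
  have hεpm : (-((-1:ℤ)^(n+1+1)) = 1) ∨ (-((-1:ℤ)^(n+1+1)) = -1) := by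
    rcases Nat.even_or_odd (n+1+1) with h | h
    · right; rw [h.neg_one_pow]
    · left; rw [h.neg_one_pow]; norm_num
  have hdetε : s (n:ℤ) * t ((n:ℤ)+1) - s ((n:ℤ)+1) * (2^(M+e+1) * t') = -((-1:ℤ)^(n+1+1)) := by
    linear_combination -hPq
  -- positivity
  have hppos : 1 ≤ s (n:ℤ) := (Hpos n).1.1
  have hqpos : 1 ≤ t (n:ℤ) := (Hpos n).1.2
  have hP0 : 0 ≤ s ((n:ℤ)+1) := by
    have := (Hpos (n+1)).1.1
    rw [show ((n+1:ℕ):ℤ) = (n:ℤ)+1 by push_cast; ring] at this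
    omega
  have hQ1 : 1 ≤ t ((n:ℤ)+1) := by
    have := (Hpos (n+1)).1.2
    rw [show ((n+1:ℕ):ℤ) = (n:ℤ)+1 by push_cast; ring] at this
    omega
  have ht'1 : 1 ≤ t' := by
    by_contra hcon
    push_neg at hcon
    rw [htk] at hqpos
    nlinarith [pow_pos (show (0:ℤ) < 2 by norm_num) (M+e+1)]
  -- composition equations
  obtain ⟨hcns, hcnt⟩ := Hcomp n
  rw [hα, hβ, htk] at hcns
  rw [hγ, hδ, htk] at hcnt
  obtain ⟨hc1s, hc1t⟩ := Hcomp (n+1)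
  rw [show ((n+1:ℕ):ℤ) = (n:ℤ)+1 by push_cast; ring, hα, hβ] at hc1s
  rw [show ((n+1:ℕ):ℤ) = (n:ℤ)+1 by push_cast; ring, hγ, hδ] at hc1t
  -- Q = t(n+1) is odd
  have hQodd : t ((n:ℤ)+1) % 2 = 1 := by
    have h1 := Int.mul_emod (s (n:ℤ)) (t ((n:ℤ)+1)) 2
    rw [hpodd, one_mul] at h1
    have h2 : s ((n:ℤ)+1) * (2^(M+e+1) * t') = 2 * (s ((n:ℤ)+1) * (2^(M+e) * t')) := by ring
    rcases hεpm with h | h <;> rw [h] at hdetε <;> omega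
  -- Jacobi periodicity at n+1
  have hJ := hJper ((n:ℤ)+1) (by positivity) (Int.odd_iff.mpr hQodd)
  -- the new odd part t''
  have hup : (u' * s (n:ℤ)) % 2 = 1 := by
    have h1 := Int.mul_emod u' (s (n:ℤ)) 2
    rw [hpodd, hu'odd, one_mul] at h1
    omega
  have h2me : (2:ℤ)^(M+2) * 2^e = 2^(M+e+1)*2 := by
    rw [← pow_add, ← pow_succ]
    congr 1
    omega
  have ht2 : t ((n:ℤ) + L) = 2^(M+e+1) * (t' + 2*u'*(s (n:ℤ)) + 2^(M+2)*v*t') := by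
    rw [hcnt, hu]
    linear_combination (u' * s (n:ℤ)) * h2me
  have ht''1 : 1 ≤ t' + 2*u'*(s (n:ℤ)) + 2^(M+2)*v*t' := by
    have hq2pos : 1 ≤ t ((n:ℤ) + L) := by
      have := (Hpos (n+L)).1.2
      rw [show ((n+L:ℕ):ℤ) = (n:ℤ)+L by push_cast; ring] at this
      omega
    rw [ht2] at hq2pos
    by_contra hcon
    push_neg at hcon
    nlinarith [pow_pos (show (0:ℤ) < 2 by norm_num) (M+e+1)]
  refine ⟨t' + 2*u'*(s (n:ℤ)) + 2^(M+2)*v*t', ?_, ?_, ht2, ?_⟩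
  · rw [show t' + 2*u'*(s (n:ℤ)) + 2^(M+2)*v*t'
        = t' + 2*(u'*(s (n:ℤ))) + 4*(2^M*(v*t')) from by ring]
    exact Int.odd_iff.mpr (by omega)
  · show _ % (4:ℤ) = _ % (4:ℤ)
    rw [show t' + 2*u'*(s (n:ℤ)) + 2^(M+2)*v*t'
        = t' + 2*(u'*(s (n:ℤ))) + 4*(2^M*(v*t')) from by ring]
    omega
  · have hQ₂1 : 1 ≤ t ((n:ℤ)+1+L) := by
      have := (Hpos (n+1+L)).1.2
      rw [show ((n+1+L:ℕ):ℤ) = (n:ℤ)+1+L by push_cast; ring] at this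
      omega
    rw [ht2, htk]
    exact core (M+e+1) M e rfl x y u v u' hu hu'odd hdetM (s (n:ℤ)) t'
      (s ((n:ℤ)+1)) (t ((n:ℤ)+1)) ht'1 hP0 hQ1 (by omega) ht'odd
      (-((-1:ℤ)^(n+1+1))) hεpm hdetε
      (s ((n:ℤ)+L)) (s ((n:ℤ)+1+L)) (t ((n:ℤ)+1+L)) _
      rfl ht''1 hcns hc1s hc1t hQ₂1 hJ
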